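/- arXiv:2310.00782 — 2 statements merged into one kernel-verified Lean document; each statement's English description precedes it below -/
import Mathlib

section
/- Under the blocker-set-sequence hypothesis (Q_0 = V; every shortest path of exactly h_{i-1} hops from a node of Q_{i-1} meets Q_i; 2h_{i-1} ≤ h_i; every shortest path has at most h_k hops), for every node v lying on a directed cycle, letting C_v be a minimum-weight cycle through v, there exist an out-neighbor u of v, an index j, and a node q ∈ Q_j such that wt(C_v) = w(v,u) + δ^{h_j}(u,q) + δ^{h_j}(q,v). -/
open scoped ENNReal

variable {V : Type*}

/-- `p` is a walk from `s` to `t` along edges of `E`. -/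
def IsWalkFrom (E : V → V → Prop) (s t : V) (p : List V) : Prop :=
  List.Chain E s p ∧ (s :: p).getLast (List.cons_ne_nil s p) = t

/-- Total weight of the walk `s :: p`. -/
noncomputable def walkWeight (w : V → V → NNReal) (s : V) (p : List V) : ℝ≥0∞ :=
  (List.zipWith (fun a b => ((w a b : ℝ≥0∞))) (s :: p) p).sum

/-- `h`-hop-bounded shortest-path distance (`⊤` if no walk with at most `h` edges exists). -/
noncomputable def hopDist (E : V → V → Prop) (w : V → V → NNReal) (h : ℕ) (s t : V) : ℝ≥0∞ :=
  ⨅ (p : List V) (_ : IsWalkFrom E s t p) (_ : p.length ≤ h), walkWeight w s p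

/-- Shortest-path distance (`⊤` if no walk exists). -/
noncomputable def gdist (E : V → V → Prop) (w : V → V → NNReal) (s t : V) : ℝ≥0∞ :=
  ⨅ (p : List V) (_ : IsWalkFrom E s t p), walkWeight w s p

/-- `c` is a simple (directed) cycle through `v`: a closed walk from `v` to `v`
with at least one edge and no repeated vertices. -/
def IsCycleThrough (E : V → V → Prop) (v : V) (c : List V) : Prop :=
  IsWalkFrom E v v c ∧ c ≠ [] ∧ c.Nodup

/-- `c` is a simple cycle through `v` in an undirected graph (at least 3 edges,
so that no edge is traversed twice). -/
def IsUCycleThrough (E : V → V → Prop) (v : V) (c : List V) : Prop :=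
  IsWalkFrom E v v c ∧ 3 ≤ c.length ∧ c.Nodup

/-- The (undirected) edge `{a, b}` appears on the walk `s :: p`. -/
def MemEdge (s : V) (p : List V) (a b : V) : Prop :=
  ∃ i, i + 1 ≤ p.length ∧
    ((a = (s :: p).getD i s ∧ b = (s :: p).getD (i + 1) s) ∨
     (b = (s :: p).getD i s ∧ a = (s :: p).getD (i + 1) s))

lemma walkWeight_nil (w : V → V → NNReal) (s : V) : walkWeight w s [] = 0 := rfl

lemma walkWeight_cons (w : V → V → NNReal) (s a : V) (p : List V) :
    walkWeight w s (a :: p) = (w s a : ℝ≥0∞) + walkWeight w a p := by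
  simp [walkWeight]

lemma isWalkFrom_nil {E : V → V → Prop} {s t : V} : IsWalkFrom E s t [] ↔ s = t := by
  simp [IsWalkFrom, List.Chain]

lemma isWalkFrom_cons {E : V → V → Prop} {s t a : V} {p : List V} :
    IsWalkFrom E s t (a :: p) ↔ E s a ∧ IsWalkFrom E a t p := by
  simp [IsWalkFrom, and_assoc, List.Chain]

lemma walk_append {E : V → V → Prop} {w : V → V → NNReal} {s m t : V} {p q : List V}
    (h1 : IsWalkFrom E s m p) (h2 : IsWalkFrom E m t q) :
    IsWalkFrom E s t (p ++ q) ∧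
      walkWeight w s (p ++ q) = walkWeight w s p + walkWeight w m q := by
  induction p generalizing s with
  | nil =>
    obtain rfl : s = m := isWalkFrom_nil.mp h1
    simpa [walkWeight_nil] using h2
  | cons a p ih =>
    rw [isWalkFrom_cons] at h1
    obtain ⟨he, h1⟩ := h1
    obtain ⟨hw, hww⟩ := ih h1
    refine ⟨isWalkFrom_cons.mpr ⟨he, hw⟩, ?_⟩
    rw [List.cons_append, walkWeight_cons, walkWeight_cons, hww, add_assoc]

/-- Splitting a walk at position `m`. -/
lemma walk_split {E : V → V → Prop} (w : V → V → NNReal) {s t : V} {p : List V}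
    (m : ℕ) (hm : m ≤ p.length) (hw : IsWalkFrom E s t p) :
    IsWalkFrom E s ((s :: p).getD m s) (p.take m) ∧
    IsWalkFrom E ((s :: p).getD m s) t (p.drop m) ∧
    walkWeight w s p = walkWeight w s (p.take m) + walkWeight w ((s :: p).getD m s) (p.drop m) := by
  induction m generalizing s p with
  | zero =>
    refine ⟨isWalkFrom_nil.mpr rfl, ?_, ?_⟩ <;> simp [walkWeight_nil, hw]
  | succ m ih =>
    match p with
    | [] => simp at hm
    | a :: p =>
      rw [isWalkFrom_cons] at hw
      obtain ⟨he, hw⟩ := hw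
      simp only [List.length_cons, Nat.succ_le_succ_iff] at hm
      obtain ⟨h1, h2, h3⟩ := ih hm hw
      have hd : (s :: a :: p).getD (m + 1) s = (a :: p).getD m a := by
        rw [List.getD_cons_succ]
        rw [List.getD_eq_getElem _ _ (by simpa using Nat.lt_succ_of_le hm),
            List.getD_eq_getElem _ _ (by simpa using Nat.lt_succ_of_le hm)]
      rw [hd, List.take_succ_cons, List.drop_succ_cons]
      exact ⟨isWalkFrom_cons.mpr ⟨he, h1⟩, h2, by
        rw [walkWeight_cons, walkWeight_cons, h3, add_assoc]⟩

lemma gdist_le {E : V → V → Prop} {w : V → V → NNReal} {s t : V} {p : List V}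
    (hp : IsWalkFrom E s t p) : gdist E w s t ≤ walkWeight w s p :=
  iInf₂_le p hp

lemma hopDist_le {E : V → V → Prop} {w : V → V → NNReal} {h : ℕ} {s t : V} {p : List V}
    (hp : IsWalkFrom E s t p) (hl : p.length ≤ h) :
    hopDist E w h s t ≤ walkWeight w s p := by
  refine le_trans (iInf₂_le p hp) ?_
  exact iInf_le _ hl

lemma gdist_le_hopDist {E : V → V → Prop} {w : V → V → NNReal} {h : ℕ} {s t : V} :
    gdist E w s t ≤ hopDist E w h s t := by
  refine le_iInf₂ fun p hp => ?_
  exact le_iInf fun _ => gdist_le hp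

lemma exists_walk_lt {E : V → V → Prop} {w : V → V → NNReal} {s t : V} {x : ℝ≥0∞}
    (hx : gdist E w s t < x) : ∃ p, IsWalkFrom E s t p ∧ walkWeight w s p < x := by
  simp only [gdist, iInf_lt_iff] at hx
  obtain ⟨p, hp, hw⟩ := hx
  exact ⟨p, hp, hw⟩

lemma walkWeight_ne_top (w : V → V → NNReal) (s : V) (p : List V) :
    walkWeight w s p ≠ ⊤ := by
  induction p generalizing s with
  | nil => simp [walkWeight_nil]
  | cons a p ih => rw [walkWeight_cons]; exact ENNReal.add_ne_top.mpr ⟨ENNReal.coe_ne_top, ih a⟩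

/-- Subwalks of a shortest walk are shortest. -/
lemma split_shortest {E : V → V → Prop} {w : V → V → NNReal} {s t : V} {p : List V}
    (m : ℕ) (hm : m ≤ p.length) (hw : IsWalkFrom E s t p)
    (hsh : walkWeight w s p = gdist E w s t) :
    walkWeight w s (p.take m) = gdist E w s ((s :: p).getD m s) ∧
    walkWeight w ((s :: p).getD m s) (p.drop m) = gdist E w ((s :: p).getD m s) t := by
  obtain ⟨h1, h2, h3⟩ := walk_split (E := E) w m hm hw
  constructor
  · refine le_antisymm ?_ (gdist_le h1)
    by_contra hlt
    push_neg at hlt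
    obtain ⟨r, hr, hrw⟩ := exists_walk_lt hlt
    obtain ⟨hrw2, hrww⟩ := walk_append (w := w) hr h2
    have h5 : gdist E w s t ≤ walkWeight w s r + walkWeight w ((s :: p).getD m s) (p.drop m) :=
      hrww ▸ gdist_le hrw2
    have h6 : walkWeight w s r + walkWeight w ((s :: p).getD m s) (p.drop m)
        < walkWeight w s p := by
      rw [h3]
      exact ENNReal.add_lt_add_right (walkWeight_ne_top _ _ _) hrw
    exact absurd (h5.trans_lt h6) (by rw [hsh]; exact lt_irrefl _)
  · refine le_antisymm ?_ (gdist_le h2)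
    by_contra hlt
    push_neg at hlt
    obtain ⟨r, hr, hrw⟩ := exists_walk_lt hlt
    obtain ⟨hrw2, hrww⟩ := walk_append (w := w) h1 hr
    have h5 : gdist E w s t ≤ walkWeight w s (p.take m) + walkWeight w ((s :: p).getD m s) r :=
      hrww ▸ gdist_le hrw2
    have h6 : walkWeight w s (p.take m) + walkWeight w ((s :: p).getD m s) r
        < walkWeight w s p := by
      rw [h3]
      exact ENNReal.add_lt_add_left (walkWeight_ne_top _ _ _) hrw
    exact absurd (h5.trans_lt h6) (by rw [hsh]; exact lt_irrefl _)

lemma walk_unappend {E : V → V → Prop} (w : V → V → NNReal) {s t : V} {p1 p2 : List V}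
    (hw : IsWalkFrom E s t (p1 ++ p2)) :
    IsWalkFrom E s ((s :: p1).getLast (List.cons_ne_nil s p1)) p1 ∧
    IsWalkFrom E ((s :: p1).getLast (List.cons_ne_nil s p1)) t p2 ∧
    walkWeight w s (p1 ++ p2)
      = walkWeight w s p1 + walkWeight w ((s :: p1).getLast (List.cons_ne_nil s p1)) p2 := by
  induction p1 generalizing s with
  | nil => exact ⟨isWalkFrom_nil.mpr rfl, hw, by simp [walkWeight_nil]⟩
  | cons a p1 ih =>
    rw [List.cons_append, isWalkFrom_cons] at hw
    obtain ⟨he, hw⟩ := hw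
    obtain ⟨h1, h2, h3⟩ := ih hw
    rw [List.getLast_cons (List.cons_ne_nil a p1)]
    exact ⟨isWalkFrom_cons.mpr ⟨he, h1⟩, h2, by
      rw [List.cons_append, walkWeight_cons, walkWeight_cons, h3, add_assoc]⟩

lemma extract_aux {E : V → V → Prop} (w : V → V → NNReal) :
    ∀ (n : ℕ) (p : List V) (s t : V), p.length ≤ n → IsWalkFrom E s t p →
    ∃ p', IsWalkFrom E s t p' ∧ walkWeight w s p' ≤ walkWeight w s p ∧
      (s :: p').Nodup ∧ ∀ x ∈ p', x ∈ p := by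
  intro n
  induction n with
  | zero =>
    intro p s t hl hw
    rw [Nat.le_zero, List.length_eq_zero_iff] at hl
    subst hl
    exact ⟨[], hw, le_refl _, List.nodup_singleton s, by simp⟩
  | succ n ih =>
    intro p s t hl hw
    by_cases hs : s ∈ p
    · obtain ⟨p1, p2, rfl⟩ := List.append_of_mem hs
      have hre : p1 ++ s :: p2 = (p1 ++ [s]) ++ p2 := by simp
      rw [hre] at hw hl ⊢
      have hlast : ((s :: (p1 ++ [s])).getLast (List.cons_ne_nil _ _)) = s := by
        show ((s :: p1) ++ [s]).getLast (by simp) = s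
        exact List.getLast_concat
      obtain ⟨h1, h2, h3⟩ := walk_unappend w hw
      rw [hlast] at h2 h3
      have hl2 : p2.length ≤ n := by
        simp only [List.length_append, List.length_append, List.length_singleton] at hl
        omega
      obtain ⟨p', hp1, hp2, hp3, hp4⟩ := ih p2 s t hl2 h2
      exact ⟨p', hp1, by rw [h3]; exact le_add_of_nonneg_of_le zero_le hp2, hp3,
        fun x hx => by simp [hp4 x hx]⟩
    · match p with
      | [] => exact ⟨[], hw, le_refl _, List.nodup_singleton s, by simp⟩
      | a :: rest =>
        rw [isWalkFrom_cons] at hw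
        obtain ⟨he, hw⟩ := hw
        have hl2 : rest.length ≤ n := by simp at hl; omega
        obtain ⟨p', hp1, hp2, hp3, hp4⟩ := ih rest a t hl2 hw
        refine ⟨a :: p', isWalkFrom_cons.mpr ⟨he, hp1⟩, ?_, ?_, ?_⟩
        · rw [walkWeight_cons, walkWeight_cons]
          exact add_le_add le_rfl hp2
        · refine List.nodup_cons.mpr ⟨?_, hp3⟩
          intro hmem
          apply hs
          rcases List.mem_cons.mp hmem with h | h
          · exact h ▸ List.mem_cons_self (a := a) (l := rest)
          · exact List.mem_cons_of_mem a (hp4 s h)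
        · intro x hx
          rcases List.mem_cons.mp hx with h | h
          · exact h ▸ List.mem_cons_self (a := a) (l := rest)
          · exact List.mem_cons_of_mem a (hp4 x h)

lemma mem_getD {l : List V} {x : V} (hx : x ∈ l) (d : V) :
    ∃ r < l.length, l.getD r d = x := by
  obtain ⟨i, hi, he⟩ := List.getElem_of_mem hx
  exact ⟨i, hi, by rw [List.getD_eq_getElem _ _ hi, he]⟩

lemma vtx_sub (p : List V) (u : V) (m n r : ℕ) (hr : r ≤ n) (hmn : m + n ≤ p.length) :
    (((u :: p).getD m u) :: ((p.drop m).take n)).getD r ((u :: p).getD m u)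
      = (u :: p).getD (m + r) u := by
  match r with
  | 0 => simp
  | r + 1 =>
    rw [List.getD_cons_succ]
    have h1 : r < ((p.drop m).take n).length := by
      rw [List.length_take, List.length_drop]; omega
    have h2 : m + r < p.length := by omega
    rw [List.getD_eq_getElem _ _ h1, List.getElem_take, List.getElem_drop,
      show m + (r + 1) = (m + r) + 1 by omega, List.getD_cons_succ,
      List.getD_eq_getElem _ _ h2]

theorem stmt4 (E : V → V → Prop) (w : V → V → NNReal)
    (Q : ℕ → Set V) (h : ℕ → ℕ) (k : ℕ)
    (hQ0 : Q 0 = Set.univ)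
    (hpos : ∀ i, 0 < h i)
    (hgrow : ∀ i, 1 ≤ i → i ≤ k → 2 * h (i - 1) ≤ h i)
    (hblock : ∀ i, 1 ≤ i → i ≤ k → ∀ s' ∈ Q (i - 1), ∀ (t' : V) (p : List V),
      IsWalkFrom E s' t' p → p.length = h (i - 1) →
      walkWeight w s' p = gdist E w s' t' → ∃ x ∈ s' :: p, x ∈ Q i)
    (hbound : ∀ (s t : V) (p : List V), IsWalkFrom E s t p →
      walkWeight w s p = gdist E w s t → p.length ≤ h k)
    (v : V) (c : List V) (hc : IsCycleThrough E v c)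
    (hmin : ∀ c' : List V, IsCycleThrough E v c' → walkWeight w v c ≤ walkWeight w v c') :
    ∃ u : V, E v u ∧ ∃ j ≤ k, ∃ q ∈ Q j,
      walkWeight w v c
        = (w v u : ℝ≥0∞) + hopDist E w (h j) u q + hopDist E w (h j) q v := by
  obtain ⟨hcw, hcne, hcnd⟩ := hc
  obtain ⟨u, cs, rfl⟩ := List.exists_cons_of_ne_nil hcne
  rw [isWalkFrom_cons] at hcw
  obtain ⟨hEvu, hwcs⟩ := hcw
  have hQv0 : ∀ x : V, x ∈ Q 0 := fun x => hQ0 ▸ Set.mem_univ x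
  by_cases huv : u = v
  · -- self-loop case: cs = []
    subst huv
    have hcs : cs = [] := by
      by_contra hne
      have h1 : (u :: cs).getLast (List.cons_ne_nil u cs) = cs.getLast hne :=
        List.getLast_cons hne
      have h2 : cs.getLast hne ∈ cs := List.getLast_mem hne
      have : u ∈ cs := by
        have := hwcs.2
        rw [List.getLast_cons hne] at this
        exact this ▸ h2
      exact (List.nodup_cons.mp hcnd).1 this
    subst hcs
    refine ⟨u, hEvu, 0, Nat.zero_le k, u, hQv0 u, ?_⟩
    have hz : hopDist E w (h 0) u u = 0 :=
      le_antisymm (hopDist_le (isWalkFrom_nil.mpr rfl) (Nat.zero_le _)) zero_le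
    rw [hz, walkWeight_cons, walkWeight_nil]
    ring
  · -- main case
    have heq : walkWeight w u cs = gdist E w u v := by
      refine le_antisymm ?_ (gdist_le hwcs)
      by_contra hlt
      push_neg at hlt
      obtain ⟨r, hr, hrw⟩ := exists_walk_lt hlt
      obtain ⟨r', hr'1, hr'2, hr'3, -⟩ := extract_aux w r.length r u v le_rfl hr
      have hmin' := hmin (u :: r') ⟨isWalkFrom_cons.mpr ⟨hEvu, hr'1⟩, List.cons_ne_nil _ _, hr'3⟩
      rw [walkWeight_cons, walkWeight_cons] at hmin'
      have h1 : walkWeight w u cs ≤ walkWeight w u r' :=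
        (ENNReal.add_le_add_iff_left ENNReal.coe_ne_top).mp hmin'
      exact absurd h1 (not_le.mpr (lt_of_le_of_lt hr'2 hrw))
    set ℓ := cs.length with hℓ
    have hk : ℓ ≤ h k := hbound u v cs hwcs heq
    set vtx : ℕ → V := fun m => (u :: cs).getD m u with hvtx
    -- from a good position, conclude
    have final : ∀ j ≤ k, ∀ m ≤ ℓ, vtx m ∈ Q j → m ≤ h j → ℓ - m ≤ h j →
        ∃ u' : V, E v u' ∧ ∃ j' ≤ k, ∃ q ∈ Q j',
          walkWeight w v (u :: cs)
            = (w v u' : ℝ≥0∞) + hopDist E w (h j') u' q + hopDist E w (h j') q v := by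
      intro j hj m hm hQm hmh hmh2
      obtain ⟨hpre, hsuf, hsum⟩ := walk_split (E := E) w m hm hwcs
      obtain ⟨hpres, hsufs⟩ := split_shortest m hm hwcs heq
      have hlentake : (cs.take m).length = m := by rw [List.length_take]; omega
      have hlendrop : (cs.drop m).length = ℓ - m := by rw [List.length_drop]
      have hA : hopDist E w (h j) u (vtx m) = walkWeight w u (cs.take m) := by
        refine le_antisymm (hopDist_le hpre (by rw [hlentake]; exact hmh)) ?_
        rw [hpres]; exact gdist_le_hopDist
      have hB : hopDist E w (h j) (vtx m) v = walkWeight w (vtx m) (cs.drop m) := by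
        refine le_antisymm (hopDist_le hsuf (by rw [hlendrop]; exact hmh2)) ?_
        rw [hsufs]; exact gdist_le_hopDist
      refine ⟨u, hEvu, j, hj, vtx m, hQm, ?_⟩
      rw [walkWeight_cons, hA, hB, hsum, add_assoc]
    -- partial sums
    set S : ℕ → ℕ := fun i => ∑ j ∈ Finset.range i, h j with hS
    have hSle : ∀ i ≤ k, S i ≤ h i := by
      intro i
      induction i with
      | zero => intro _; simp [hS]
      | succ i ih =>
        intro hik
        have h1 : S (i + 1) = S i + h i := Finset.sum_range_succ _ _
        have h2 := hgrow (i + 1) (by omega) hik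
        simp only [Nat.add_sub_cancel] at h2
        have := ih (by omega)
        omega
    -- the blocker induction
    have claim : ∀ i ≤ k,
        (∃ j ≤ k, ∃ m ≤ ℓ, vtx m ∈ Q j ∧ m ≤ h j ∧ ℓ - m ≤ h j) ∨
        (∃ m, m ≤ ℓ ∧ m ≤ S i ∧ vtx m ∈ Q i) := by
      intro i
      induction i with
      | zero => intro _; exact Or.inr ⟨0, Nat.zero_le _, Nat.zero_le _, hQv0 _⟩
      | succ i ih =>
        intro hik
        rcases ih (by omega) with hg | ⟨m, hm, hmS, hQm⟩
        · exact Or.inl hg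
        · by_cases hcase : ℓ - m ≤ h i
          · exact Or.inl ⟨i, by omega, m, hm, hQm, le_trans hmS (hSle i (by omega)), hcase⟩
          · push_neg at hcase
            -- the subwalk of exactly h i hops from vtx m
            obtain ⟨hpre, hsuf, hsum⟩ := walk_split (E := E) w m hm hwcs
            have hsufs := (split_shortest m hm hwcs heq).2
            have hhi : h i ≤ (cs.drop m).length := by rw [List.length_drop]; omega
            obtain ⟨hpre2, hsuf2, hsum2⟩ := walk_split (E := E) w (h i) hhi hsuf
            have hpre2s := (split_shortest (h i) hhi hsuf hsufs).1
            have hlen : ((cs.drop m).take (h i)).length = h i := by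
              rw [List.length_take]; omega
            obtain ⟨x, hxmem, hxQ⟩ := hblock (i + 1) (by omega) hik (vtx m)
              (by simpa using hQm) _ _ hpre2 hlen hpre2s
            obtain ⟨r, hrl, hre⟩ := mem_getD hxmem (vtx m)
            have hrle : r ≤ h i := by
              simp only [List.length_cons, hlen] at hrl; omega
            have hxv : x = vtx (m + r) := by
              rw [← hre]
              exact vtx_sub cs u m (h i) r hrle (by omega)
            refine Or.inr ⟨m + r, by omega, ?_, hxv ▸ hxQ⟩
            have h1 : S (i + 1) = S i + h i := Finset.sum_range_succ _ _
            omega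
    rcases claim k le_rfl with ⟨j, hj, m, hm, hQm, h1, h2⟩ | ⟨m, hm, hmS, hQm⟩
    · exact final j hj m hm hQm h1 h2
    · exact final k le_rfl m hm hQm (le_trans hmS (hSle k le_rfl)) (by omega)
end

section
/- For any two nodes q and v and hop bounds h1, h2, if δ^{h1}(q,u) and δ^{h1}(q,v) are finite and witnessed by paths P_1 (q to u) and P_2 (q to v) neither containing the edge (u,v), then the graph contains a cycle of total weight at most w(u,v) + δ^{h1}(q,u) + δ^{h1}(q,v); consequently, the minimum-cycle weight of G is at most this quantity. -/
open scoped ENNReal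

variable {V : Type*}

def pairs : List V → List (V × V)
  | a :: b :: l => (a, b) :: pairs (b :: l)
  | _ => []

@[simp] lemma pairs_nil : pairs ([] : List V) = [] := rfl
@[simp] lemma pairs_single (a : V) : pairs [a] = [] := rfl
@[simp] lemma pairs_cons_cons (a b : V) (l : List V) :
    pairs (a :: b :: l) = (a, b) :: pairs (b :: l) := rfl

noncomputable def wgtL (w : V → V → NNReal) (L : List V) : ℝ≥0∞ :=
  ((pairs L).map fun p => ((w p.1 p.2 : ℝ≥0∞))).sum


lemma walkWeight_eq_wgtL (w : V → V → NNReal) (s : V) (p : List V) :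
    walkWeight w s p = wgtL w (s :: p) := by
  induction p generalizing s with
  | nil => rfl
  | cons b t ih => simp [walkWeight, wgtL] at ih ⊢; rw [ih b]
lemma pairs_glue : ∀ (L₁ L₂ : List V) (h1 : L₁ ≠ []) (h2 : L₂ ≠ []),
    L₁.getLast h1 = L₂.head h2 → pairs (L₁ ++ L₂.tail) = pairs L₁ ++ pairs L₂
  | [], _, h1, _, _ => absurd rfl h1
  | [a], c :: l, _, _, hl => by
      simp at hl; subst hl
      cases l <;> simp
  | a :: b :: t, L₂, _, h2, hl => by
      have := pairs_glue (b :: t) L₂ (by simp) h2 (by simpa [List.getLast_cons] using hl)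
      simpa using this

lemma chain'_glue (E : V → V → Prop) (L₁ L₂ : List V) (h1 : L₁ ≠ []) (h2 : L₂ ≠ [])
    (hl : L₁.getLast h1 = L₂.head h2) (c1 : List.Chain' E L₁) (c2 : List.Chain' E L₂) :
    List.Chain' E (L₁ ++ L₂.tail) := by
  obtain ⟨c, l, rfl⟩ := List.exists_cons_of_ne_nil h2
  simp only [List.head_cons] at hl
  refine c1.append (c2.tail) ?_
  intro x hx y hy
  rw [List.getLast?_eq_getLast h1, Option.mem_some_iff] at hx
  replace c2 := List.isChain_cons.mp c2
  subst hx hl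
  exact c2.1 y hy

lemma head_glue (L₁ L₂ : List V) (h1 : L₁ ≠ []) (h : L₁ ++ L₂.tail ≠ []) :
    (L₁ ++ L₂.tail).head h = L₁.head h1 := by
  obtain ⟨a, t, rfl⟩ := List.exists_cons_of_ne_nil h1
  simp

lemma getLast_glue (L₁ L₂ : List V) (h1 : L₁ ≠ []) (h2 : L₂ ≠ [])
    (hl : L₁.getLast h1 = L₂.head h2) (h : L₁ ++ L₂.tail ≠ []) :
    (L₁ ++ L₂.tail).getLast h = L₂.getLast h2 := by
  obtain ⟨c, l, rfl⟩ := List.exists_cons_of_ne_nil h2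
  simp only [List.head_cons] at hl
  cases l with
  | nil => simpa using hl
  | cons d m =>
      have e : (L₁ ++ (c :: d :: m).tail).getLast? = (c :: d :: m).getLast? := by
        simp [List.getLast?_append, List.getLast?_eq_getLast (l := d::m) (by simp)]
      rwa [List.getLast?_eq_getLast h, List.getLast?_eq_getLast h2, Option.some_inj] at e

lemma wgtL_glue (w : V → V → NNReal) (L₁ L₂ : List V) (h1 : L₁ ≠ []) (h2 : L₂ ≠ [])
    (hl : L₁.getLast h1 = L₂.head h2) :
    wgtL w (L₁ ++ L₂.tail) = wgtL w L₁ + wgtL w L₂ := by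
  simp [wgtL, pairs_glue L₁ L₂ h1 h2 hl]
lemma head_congr {L M : List V} (h : L = M) (hL : L ≠ []) (hM : M ≠ []) :
    L.head hL = M.head hM := by subst h; rfl

lemma getLast_congr {L M : List V} (h : L = M) (hL : L ≠ []) (hM : M ≠ []) :
    L.getLast hL = M.getLast hM := by subst h; rfl

lemma not_nodup_split : ∀ {L : List V}, ¬ L.Nodup → ∃ (x : V) (A B C : List V),
    L = A ++ x :: (B ++ x :: C)
  | [], h => absurd List.nodup_nil h
  | a :: l, h => by
      by_cases ha : a ∈ l
      · obtain ⟨s, t, rfl⟩ := List.append_of_mem ha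
        exact ⟨a, [], s, t, rfl⟩
      · have : ¬ l.Nodup := fun hn => h (List.nodup_cons.mpr ⟨ha, hn⟩)
        obtain ⟨x, A, B, C, rfl⟩ := not_nodup_split this
        exact ⟨x, a :: A, B, C, rfl⟩

lemma exists_nodup_walk (E : V → V → Prop) (w : V → V → NNReal) :
    ∀ (n : ℕ) (L : List V), L.length ≤ n → ∀ (hL : L ≠ []), List.Chain' E L →
    ∃ (L' : List V) (h' : L' ≠ []), List.Chain' E L' ∧ L'.Nodup ∧
      L'.head h' = L.head hL ∧ L'.getLast h' = L.getLast hL ∧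
      wgtL w L' ≤ wgtL w L ∧ ∀ e ∈ pairs L', e ∈ pairs L := by
  intro n
  induction n with
  | zero => intro L hn hL _; simp [List.length_eq_zero_iff] at hn; exact absurd hn hL
  | succ n ih =>
    intro L hn hL hc
    by_cases hd : L.Nodup
    · exact ⟨L, hL, hc, hd, rfl, rfl, le_rfl, fun e he => he⟩
    · obtain ⟨x, A, B, C, rfl⟩ := not_nodup_split hd
      set P : List V := A ++ [x] with hP
      have hPne : P ≠ [] := by simp [hP]
      have hPlast : P.getLast hPne = x := by simp [hP, List.getLast_append_of_ne_nil]
      have hM : A ++ x :: (B ++ x :: C) = P ++ (x :: (B ++ x :: C)).tail := by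
        simp [hP]
      have hM2 : x :: (B ++ x :: C) = (x :: B ++ [x]) ++ (x :: C).tail := by
        simp
      have hQne : x :: B ++ [x] ≠ [] := by simp
      have hQlast : (x :: B ++ [x]).getLast hQne = x := by
        simp [List.getLast_append_of_ne_nil]
      have hRne : (x : V) :: C ≠ [] := by simp
      -- chain facts
      have hcP : List.Chain' E P := by
        rw [hM] at hc; exact hc.prefix (List.prefix_append _ _)
      have hcR : List.Chain' E (x :: C) := by
        have : A ++ x :: (B ++ x :: C) = (A ++ x :: B) ++ (x :: C) := by simp
        rw [this] at hc
        exact hc.suffix (List.suffix_append _ _)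
      -- candidate
      have hcand : List.Chain' E (P ++ (x :: C).tail) :=
        chain'_glue E P (x :: C) hPne hRne (by simp [hPlast]) hcP hcR
      have hlen : (P ++ (x :: C).tail).length ≤ n := by
        have := hn
        simp [hP] at this ⊢
        omega
      have hne' : P ++ (x :: C).tail ≠ [] := by simp [hP]
      obtain ⟨L', h', c', nd', hd', lt', wt', sub'⟩ :=
        ih (P ++ (x :: C).tail) hlen hne' hcand
      refine ⟨L', h', c', nd', ?_, ?_, ?_, ?_⟩
      · refine hd'.trans ?_
        refine (head_glue P (x :: C) hPne hne').trans ?_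
        refine Eq.trans ?_ (head_congr hM.symm (by rw [← hM]; exact hL) hL)
        exact (head_glue P _ hPne (by rw [← hM]; exact hL)).symm
      · refine lt'.trans ?_
        refine (getLast_glue P (x :: C) hPne hRne (by simp [hPlast]) hne').trans ?_
        refine Eq.trans ?_ (getLast_congr hM.symm (by rw [← hM]; exact hL) hL)
        refine Eq.trans ?_ (getLast_glue P _ hPne (by simp) (by simp [hPlast]) _).symm
        refine Eq.trans ?_ (getLast_congr hM2.symm (by rw [← hM2]; simp) (by simp))
        exact (getLast_glue _ (x :: C) hQne hRne (by simp [hQlast]) (by rw [← hM2]; simp)).symm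
      · refine le_trans wt' ?_
        rw [wgtL_glue w P (x :: C) hPne hRne (by simp [hPlast]), hM,
          wgtL_glue w P _ hPne (by simp) (by simp [hPlast]), hM2,
          wgtL_glue w _ (x :: C) hQne hRne (by simp [hQlast])]
        exact add_le_add_right (le_add_self) _
      · intro e he
        have := sub' e he
        rw [pairs_glue P (x :: C) hPne hRne (by simp [hPlast])] at this
        rw [hM, pairs_glue P _ hPne (by simp) (by simp [hPlast]), hM2,
          pairs_glue _ (x :: C) hQne hRne (by simp [hQlast])]
        simp at this ⊢
        tauto
lemma pairs_append_singleton (M : List V) (hM : M ≠ []) (a : V) :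
    pairs (M ++ [a]) = pairs M ++ [(M.getLast hM, a)] := by
  have := pairs_glue M [M.getLast hM, a] hM (by simp) (by simp)
  simpa using this

lemma pairs_reverse : ∀ (L : List V),
    pairs L.reverse = ((pairs L).reverse).map Prod.swap
  | [] => rfl
  | [a] => rfl
  | a :: b :: t => by
      have ih := pairs_reverse (b :: t)
      have hrev : (a :: b :: t).reverse = (b :: t).reverse ++ [a] := by simp
      rw [hrev, pairs_append_singleton ((b :: t).reverse) (by simp) a, ih]
      have : ((b :: t).reverse).getLast (by simp) = b := by
        rw [List.getLast_reverse]; simp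
      simp [this]

lemma mem_pairs_reverse {L : List V} {x y : V} :
    (x, y) ∈ pairs L.reverse ↔ (y, x) ∈ pairs L := by
  rw [pairs_reverse]
  simp [Prod.ext_iff, eq_comm, and_comm]

lemma wgtL_reverse (w : V → V → NNReal) (hw : ∀ a b, w a b = w b a) (L : List V) :
    wgtL w L.reverse = wgtL w L := by
  rw [wgtL, wgtL, pairs_reverse]
  rw [List.map_map]
  have : ((fun p : V × V => ((w p.1 p.2 : ℝ≥0∞))) ∘ Prod.swap) =
      fun p : V × V => ((w p.1 p.2 : ℝ≥0∞)) := by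
    funext p; simp [Prod.swap, hw p.2 p.1]
  rw [this, List.map_reverse, List.sum_reverse]

lemma chain'_reverse_of_symm {E : V → V → Prop} (hE : Symmetric E) {L : List V}
    (h : List.Chain' E L) : List.Chain' E L.reverse := by
  refine List.isChain_reverse.mpr ?_
  exact h.imp fun a b hab => hE hab

lemma pairs_getD : ∀ (L : List V) (x y : V), (x, y) ∈ pairs L →
    ∃ i, i + 1 < L.length ∧ ∀ d, L.getD i d = x ∧ L.getD (i + 1) d = y
  | a :: b :: l, x, y, h => by
      rcases List.mem_cons.mp h with h | h
      · exact ⟨0, by simp, fun d => by simp [Prod.ext_iff] at h; simp [h.1, h.2]⟩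
      · obtain ⟨i, hi, hd⟩ := pairs_getD (b :: l) x y h
        exact ⟨i + 1, by simpa using Nat.succ_lt_succ hi,
          fun d => by simp only [List.getD_cons_succ]; exact hd d⟩

lemma memEdge_of_pairs {s : V} {p : List V} {a b : V}
    (h : (a, b) ∈ pairs (s :: p) ∨ (b, a) ∈ pairs (s :: p)) : MemEdge s p a b := by
  rcases h with h | h
  · obtain ⟨i, hi, hd⟩ := pairs_getD (s :: p) a b h
    exact ⟨i, by simp only [List.length_cons] at hi; omega,
      Or.inl ⟨(hd s).1.symm, (hd s).2.symm⟩⟩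
  · obtain ⟨i, hi, hd⟩ := pairs_getD (s :: p) b a h
    exact ⟨i, by simp only [List.length_cons] at hi; omega,
      Or.inr ⟨(hd s).1.symm, (hd s).2.symm⟩⟩
lemma wgtL_congr {w : V → V → NNReal} {L M : List V} (h : L = M) : wgtL w L = wgtL w M := by rw [h]
theorem stmt15 (E : V → V → Prop) (hE : Symmetric E) (w : V → V → NNReal)
    (hw : ∀ a b, w a b = w b a) (u v q : V) (huv : E u v) (hne : u ≠ v)
    (h1 : ℕ) (P1 P2 : List V)
    (hP1 : IsWalkFrom E q u P1) (hl1 : P1.length ≤ h1)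
    (hw1 : walkWeight w q P1 = hopDist E w h1 q u)
    (hfin1 : hopDist E w h1 q u ≠ ⊤)
    (hP2 : IsWalkFrom E q v P2) (hl2 : P2.length ≤ h1)
    (hw2 : walkWeight w q P2 = hopDist E w h1 q v)
    (hfin2 : hopDist E w h1 q v ≠ ⊤)
    (hne1 : ¬ MemEdge q P1 u v) (hne2 : ¬ MemEdge q P2 u v) :
    (∃ (x : V) (c : List V), IsUCycleThrough E x c ∧
      walkWeight w x c ≤ (w u v : ℝ≥0∞) + hopDist E w h1 q u + hopDist E w h1 q v) ∧
    (⨅ (x : V) (c : List V) (_ : IsUCycleThrough E x c), walkWeight w x c)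
      ≤ (w u v : ℝ≥0∞) + hopDist E w h1 q u + hopDist E w h1 q v := by
  classical
  obtain ⟨hc1, hl1'⟩ := hP1
  obtain ⟨hc2, hl2'⟩ := hP2
  have c1 : List.Chain' E (q :: P1) := hc1
  have c2 : List.Chain' E (q :: P2) := hc2
  have e1 : (u, v) ∉ pairs (q :: P1) ∧ (v, u) ∉ pairs (q :: P1) :=
    ⟨fun h => hne1 (memEdge_of_pairs (Or.inl h)), fun h => hne1 (memEdge_of_pairs (Or.inr h))⟩
  have e2 : (u, v) ∉ pairs (q :: P2) ∧ (v, u) ∉ pairs (q :: P2) :=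
    ⟨fun h => hne2 (memEdge_of_pairs (Or.inl h)), fun h => hne2 (memEdge_of_pairs (Or.inr h))⟩
  set R1 : List V := (q :: P1).reverse with hR1
  have hR1ne : R1 ≠ [] := by simp [hR1]
  have hR1last : R1.getLast hR1ne = q := by
    refine (getLast_congr hR1 hR1ne (by simp)).trans ?_
    rw [List.getLast_reverse]
    simp
  set W : List V := R1 ++ (q :: P2).tail with hWdef
  have hWne : W ≠ [] := by simp [hWdef, hR1]
  have cw : List.Chain' E W :=
    chain'_glue E R1 (q :: P2) hR1ne (by simp) (by simpa using hR1last)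
      (chain'_reverse_of_symm hE c1) c2
  have hWhead : W.head hWne = u := by
    refine (head_congr hWdef hWne (by simp [hR1])).trans ?_
    refine (head_glue R1 (q :: P2) hR1ne _).trans ?_
    refine (head_congr hR1 hR1ne (by simp)).trans ?_
    rw [List.head_reverse]
    exact hl1'
  have hWlast : W.getLast hWne = v := by
    refine (getLast_congr hWdef hWne (by simp [hR1])).trans ?_
    exact (getLast_glue R1 (q :: P2) hR1ne (by simp) (by simpa using hR1last) _).trans hl2'
  have wgtW : wgtL w W = wgtL w (q :: P1) + wgtL w (q :: P2) := by
    rw [hWdef, wgtL_glue w R1 (q :: P2) hR1ne (by simp) (by simpa using hR1last),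
      hR1, wgtL_reverse w hw]
  have pairsW : pairs W = pairs R1 ++ pairs (q :: P2) :=
    pairs_glue R1 (q :: P2) hR1ne (by simp) (by simpa using hR1last)
  have eW : (u, v) ∉ pairs W ∧ (v, u) ∉ pairs W := by
    rw [pairsW]
    constructor <;> intro h <;> rcases List.mem_append.mp h with h | h
    · exact e1.2 (mem_pairs_reverse.mp h)
    · exact e2.1 h
    · exact e1.1 (mem_pairs_reverse.mp h)
    · exact e2.2 h
  obtain ⟨L', h', c', nd', hd', lt', wt', sub'⟩ :=
    exists_nodup_walk E w W.length W le_rfl hWne cw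
  rw [hWhead] at hd'
  rw [hWlast] at lt'
  -- L' = u :: p'
  obtain ⟨a, p', rfl⟩ := List.exists_cons_of_ne_nil h'
  rw [List.head_cons] at hd'
  have hd2 : u = a := hd'.symm
  subst hd2
  have eL' : (u, v) ∉ pairs (u :: p') ∧ (v, u) ∉ pairs (u :: p') :=
    ⟨fun h => eW.1 (sub' _ h), fun h => eW.2 (sub' _ h)⟩
  have hp'ne : p' ≠ [] := by
    rintro rfl
    simp at lt'
    exact hne lt'
  have hp'len : 2 ≤ p'.length := by
    match p', hp'ne with
    | [y], _ =>
        have hy : y = v := by simpa [List.getLast_cons] using lt'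
        subst hy
        exact absurd (by simp) eL'.1
    | y :: z :: t, _ => simp
  have hlastp : (u :: p').getLast (by simp) = v := lt'
  -- the cycle
  refine ?_
  set c : List V := p' ++ [u] with hc
  have hchain : List.Chain' E ((u :: p') ++ [u]) := by
    refine c'.append (List.isChain_singleton u) ?_
    intro x hx y hy
    rw [List.getLast?_eq_getLast (by simp)] at hx
    simp only [Option.mem_some_iff, List.head?_cons] at hx hy
    rw [← hx, ← hy] at *
    rw [hlastp]
    exact hE huv
  have hcyc : IsUCycleThrough E u c := by
    refine ⟨⟨hchain, ?_⟩, ?_, ?_⟩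
    · refine (getLast_congr (show u :: c = (u :: p') ++ [u] by simp [hc]) _ (by simp)).trans ?_
      exact (List.getLast_append_of_ne_nil (l := u :: p') (l' := [u]) (h₁ := by simp) (by simp)).trans rfl
    · simp [hc]; omega
    · have h2 := nd'
      rw [List.nodup_cons] at h2
      rw [hc]
      refine List.Nodup.append h2.2 (List.nodup_singleton u) ?_
      intro x hx hx'
      simp only [List.mem_singleton] at hx'
      subst hx'
      exact h2.1 hx
  have hwc : walkWeight w u c = wgtL w (u :: p') + w u v := by
    rw [walkWeight_eq_wgtL]
    have : (u :: (p' ++ [u])) = (u :: p') ++ ([v, u]).tail := by simp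
    rw [wgtL_congr this, wgtL_glue w (u :: p') [v, u] (by simp) (by simp) (by simp [hlastp])]
    congr 1
    simp only [wgtL, pairs_cons_cons, pairs_single, List.map_cons, List.map_nil,
      List.sum_cons, List.sum_nil, add_zero, hw v u]
  have hle : walkWeight w u c ≤ (w u v : ℝ≥0∞) + hopDist E w h1 q u + hopDist E w h1 q v := by
    have harr : (w u v : ℝ≥0∞) + hopDist E w h1 q u + hopDist E w h1 q v
        = (wgtL w (q :: P1) + wgtL w (q :: P2)) + w u v := by
      rw [← hw1, ← hw2, walkWeight_eq_wgtL, walkWeight_eq_wgtL]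
      ring
    rw [harr, hwc]
    exact add_le_add_left (le_trans wt' (le_of_eq wgtW)) _
  refine ⟨⟨u, c, hcyc, hle⟩, ?_⟩
  exact le_trans (iInf_le_of_le u (iInf_le_of_le c (iInf_le _ hcyc))) hle
end
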